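/- Let (n_k) be lacunary with ratio α > 1 and σ_n the Fejér mean operator on L²(ℝ) (Fourier multiplier with symbol max(0, 1 − |x|/(n+1))). Then for every f ∈ L²(ℝ) the series ∑_{k=1}^{∞} (σ_{n_{k+1}} f − σ_{n_k} f) converges unconditionally in L²(ℝ). -/

import Mathlib

open MeasureTheory FourierTransform

/-- Fejér multiplier symbol. -/
noncomputable def fejerSymbol (n : ℕ) (x : ℝ) : ℝ := max 0 (1 - |x| / (n + 1))

open Filter Finset
open scoped ENNReal NNReal

lemma fejer_nonneg (n : ℕ) (x : ℝ) : 0 ≤ fejerSymbol n x := le_max_left _ _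

lemma fejer_le_one (n : ℕ) (x : ℝ) : fejerSymbol n x ≤ 1 := by
  have : (0:ℝ) ≤ |x| / (n + 1) := by positivity
  exact max_le zero_le_one (by linarith)

lemma fejer_mono {m n : ℕ} (h : m ≤ n) (x : ℝ) : fejerSymbol m x ≤ fejerSymbol n x := by
  apply max_le_max le_rfl
  have h2 : (m:ℝ) + 1 ≤ (n:ℝ) + 1 := by exact_mod_cast Nat.succ_le_succ h
  have : |x| / ((n:ℝ)+1) ≤ |x| / ((m:ℝ)+1) := by
    apply div_le_div_of_nonneg_left (abs_nonneg x) (by positivity) h2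
  linarith

lemma fejer_continuous (n : ℕ) : Continuous (fejerSymbol n) := by
  unfold fejerSymbol
  fun_prop

lemma fejer_tendsto (x : ℝ) {u : ℕ → ℕ} (hu : Tendsto (fun k => ((u k : ℕ) : ℝ)) atTop atTop) :
    Tendsto (fun k => fejerSymbol (u k) x) atTop (nhds 1) := by
  have h1 : Tendsto (fun k => |x| / (((u k : ℕ) : ℝ) + 1)) atTop (nhds 0) :=
    Tendsto.div_atTop tendsto_const_nhds (tendsto_atTop_add_const_right _ 1 hu)
  have h2 := tendsto_const_nhds (x := (0:ℝ)) (f := atTop (α := ℕ)) |>.max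
    ((tendsto_const_nhds (x := (1:ℝ))).sub h1)
  simpa [fejerSymbol] using h2

lemma telescope_sum (g : ℕ → ℝ) (M N : ℕ) (h : M ≤ N) :
    ∑ k ∈ Finset.Ioc M N, (g (k+1) - g k) = g (N+1) - g (M+1) := by
  induction N, h using Nat.le_induction with
  | base => simp
  | succ N hMN ih => rw [Finset.sum_Ioc_succ_top hMN, ih]; ring

lemma Lp_coeFn_sum {X : Type*} [MeasurableSpace X] {μ : Measure X} (s : Finset ℕ)
    (g : ℕ → Lp ℂ 2 μ) :
    ((∑ k ∈ s, g k : Lp ℂ 2 μ) : X → ℂ) =ᵐ[μ] fun x => ∑ k ∈ s, (g k : X → ℂ) x := by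
  classical
  induction s using Finset.cons_induction with
  | empty => simp only [Finset.sum_empty]; exact Lp.coeFn_zero ℂ 2 μ
  | cons a s ha ih =>
    rw [Finset.sum_cons]
    filter_upwards [Lp.coeFn_add (g a) (∑ k ∈ s, g k), ih] with x h1 h2
    simp only [Finset.sum_cons, h1, Pi.add_apply, h2]

theorem stmt_7
    (n : ℕ → ℕ) (hn : ∀ k, 0 < n k) (α : ℝ) (hα : 1 < α)
    (hlac : ∀ k, α ≤ (n (k + 1) : ℝ) / (n k : ℝ))
    -- `F` is the Plancherel (Fourier) transform on `L²(ℝ)`.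
    (F : Lp ℂ 2 (volume : Measure ℝ) ≃ₗᵢ[ℂ] Lp ℂ 2 (volume : Measure ℝ))
    (hF : ∀ f : Lp ℂ 2 (volume : Measure ℝ), Integrable f volume →
      (F f : ℝ → ℂ) =ᵐ[volume] FourierTransform.fourier (f : ℝ → ℂ))
    -- `σ m` is the Fejér mean: the Fourier multiplier with symbol `fejerSymbol m`.
    (σ : ℕ → (Lp ℂ 2 (volume : Measure ℝ) →ₗ[ℂ] Lp ℂ 2 (volume : Measure ℝ)))
    (hσ : ∀ m f, (F (σ m f) : ℝ → ℂ) =ᵐ[volume]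
      fun x => (fejerSymbol m x : ℂ) * (F f : ℝ → ℂ) x) :
    -- unconditional convergence: every choice of signs gives a convergent series
    ∀ f : Lp ℂ 2 (volume : Measure ℝ), ∀ ε : ℕ → ℝ, (∀ k, ε k = 1 ∨ ε k = -1) →
      ∃ g : Lp ℂ 2 (volume : Measure ℝ),
        Filter.Tendsto
          (fun N => ∑ k ∈ Finset.Icc 1 N, (ε k : ℂ) • (σ (n (k + 1)) f - σ (n k) f))
          Filter.atTop (nhds g) := by
  intro f ε hε
  classical
  set h : Lp ℂ 2 (volume : Measure ℝ) := F f with hh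
  set T : ℕ → Lp ℂ 2 (volume : Measure ℝ) :=
    fun k => (ε k : ℂ) • (σ (n (k + 1)) f - σ (n k) f) with hT
  set S : ℕ → Lp ℂ 2 (volume : Measure ℝ) := fun N => ∑ k ∈ Finset.Icc 1 N, T k with hS
  suffices hC : CauchySeq S by
    obtain ⟨g, hg⟩ := cauchySeq_tendsto_of_complete hC
    exact ⟨g, hg⟩
  -- n k → ∞
  have hα0 : (0:ℝ) < α := lt_trans one_pos hα
  have hpow : ∀ k, α ^ k ≤ (n k : ℝ) := by
    intro k
    induction k with
    | zero => simpa using (by exact_mod_cast hn 0 : (1:ℝ) ≤ (n 0 : ℝ))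
    | succ k ih =>
      have hk : (0:ℝ) < (n k : ℝ) := by exact_mod_cast hn k
      have h2 : α * (n k : ℝ) ≤ (n (k+1) : ℝ) := (le_div_iff₀ hk).mp (hlac k)
      calc α ^ (k+1) = α * α ^ k := by ring
        _ ≤ α * (n k : ℝ) := by nlinarith
        _ ≤ (n (k+1) : ℝ) := h2
  have hna : Tendsto (fun k => ((n k : ℕ) : ℝ)) atTop atTop :=
    tendsto_atTop_mono hpow (tendsto_pow_atTop_atTop_of_one_lt hα)
  have hnmono : ∀ k, n k ≤ n (k + 1) := by
    intro k
    have hk : (0:ℝ) < (n k : ℝ) := by exact_mod_cast hn k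
    have h2 : α * (n k : ℝ) ≤ (n (k+1) : ℝ) := (le_div_iff₀ hk).mp (hlac k)
    have : (n k : ℝ) ≤ (n (k+1) : ℝ) := by nlinarith
    exact_mod_cast this
  -- the increments of the symbol
  set Δ : ℕ → ℝ → ℝ := fun k x => fejerSymbol (n (k+1)) x - fejerSymbol (n k) x with hΔ
  have hΔnonneg : ∀ k x, 0 ≤ Δ k x := fun k x => sub_nonneg.mpr (fejer_mono (hnmono k) x)
  -- pointwise description of F (T k)
  have hTk : ∀ᵐ x ∂(volume : Measure ℝ), ∀ k,
      (F (T k) : ℝ → ℂ) x = ((ε k : ℂ) * (Δ k x : ℂ)) * (h : ℝ → ℂ) x := by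
    rw [ae_all_iff]
    intro k
    have e1 : F (T k) = (ε k : ℂ) • (F (σ (n (k+1)) f) - F (σ (n k) f)) := by
      rw [hT, F.map_smul, F.map_sub]
    rw [e1]
    filter_upwards [Lp.coeFn_smul ((ε k : ℂ)) (F (σ (n (k+1)) f) - F (σ (n k) f)),
      Lp.coeFn_sub (F (σ (n (k+1)) f)) (F (σ (n k) f)),
      hσ (n (k+1)) f, hσ (n k) f] with x h1 h2 h3 h4
    rw [h1]
    simp only [Pi.smul_apply, smul_eq_mul]
    rw [h2]
    simp only [Pi.sub_apply, h3, h4, hΔ]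
    push_cast
    ring
  -- pointwise description of F of a finite sum of the T k
  have hsum : ∀ s : Finset ℕ, (F (∑ k ∈ s, T k) : ℝ → ℂ) =ᵐ[volume]
      fun x => (∑ k ∈ s, (ε k : ℂ) * (Δ k x : ℂ)) * (h : ℝ → ℂ) x := by
    intro s
    have e1 : F (∑ k ∈ s, T k) = ∑ k ∈ s, F (T k) := map_sum F T s
    rw [e1]
    filter_upwards [Lp_coeFn_sum s (fun k => F (T k)), hTk] with x h1 h2
    rw [h1]
    rw [Finset.sum_mul]
    exact Finset.sum_congr rfl fun k _ => h2 k
  -- the dominating sequence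
  set B : ℕ → ℝ≥0∞ := fun M =>
    eLpNorm (fun x => ((1 - fejerSymbol (n M) x : ℝ) : ℂ) * (h : ℝ → ℂ) x) 2 volume with hB
  -- B M ≤ eLpNorm h < ∞
  have hBle : ∀ M, B M ≤ eLpNorm (h : ℝ → ℂ) 2 volume := by
    intro M
    apply eLpNorm_mono_ae
    apply ae_of_all
    intro x
    rw [norm_mul, Complex.norm_real, Real.norm_eq_abs,
      abs_of_nonneg (by linarith [fejer_le_one (n M) x])]
    nlinarith [fejer_nonneg (n M) x, norm_nonneg ((h : ℝ → ℂ) x)]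
  have hBfin : ∀ M, B M < ⊤ := fun M => lt_of_le_of_lt (hBle M) (Lp.eLpNorm_lt_top h)
  -- key norm bound
  have hbound : ∀ M N : ℕ, M ≤ N → ‖S N - S M‖ ≤ (B (M+1)).toReal := by
    intro M N hMN
    have hsplit : S N - S M = ∑ k ∈ Finset.Ioc M N, T k := by
      have h1 : ∀ K, Finset.Icc 1 K = Finset.Ioc 0 K := fun K => by
        rw [← Finset.Icc_add_one_left_eq_Ioc, zero_add]
      rw [hS]
      simp only [h1]
      rw [sub_eq_iff_eq_add, add_comm]
      exact (Finset.sum_Ioc_consecutive T (Nat.zero_le M) hMN).symm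
    rw [hsplit]
    have e1 : ‖∑ k ∈ Finset.Ioc M N, T k‖ = ‖F (∑ k ∈ Finset.Ioc M N, T k)‖ :=
      (F.norm_map _).symm
    rw [e1, Lp.norm_def]
    apply ENNReal.toReal_mono (hBfin (M+1)).ne
    rw [eLpNorm_congr_ae (hsum (Finset.Ioc M N))]
    apply eLpNorm_mono_ae
    apply ae_of_all
    intro x
    rw [norm_mul, norm_mul, Complex.norm_real, Real.norm_eq_abs]
    apply mul_le_mul_of_nonneg_right _ (norm_nonneg _)
    have habs : ∀ k, ‖(ε k : ℂ) * (Δ k x : ℂ)‖ = Δ k x := by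
      intro k
      rw [norm_mul, Complex.norm_real, Complex.norm_real, Real.norm_eq_abs, Real.norm_eq_abs,
        abs_of_nonneg (hΔnonneg k x)]
      rcases hε k with hk | hk <;> simp [hk]
    calc ‖∑ k ∈ Finset.Ioc M N, (ε k : ℂ) * (Δ k x : ℂ)‖
        ≤ ∑ k ∈ Finset.Ioc M N, ‖(ε k : ℂ) * (Δ k x : ℂ)‖ := norm_sum_le _ _
      _ = ∑ k ∈ Finset.Ioc M N, Δ k x := Finset.sum_congr rfl fun k _ => habs k
      _ = fejerSymbol (n (N+1)) x - fejerSymbol (n (M+1)) x :=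
          telescope_sum (fun k => fejerSymbol (n k) x) M N hMN
      _ ≤ 1 - fejerSymbol (n (M+1)) x := by linarith [fejer_le_one (n (N+1)) x]
      _ ≤ |1 - fejerSymbol (n (M+1)) x| := le_abs_self _
  -- B M → 0
  have hBtend : Tendsto B atTop (nhds 0) := by
    have hmeas : AEStronglyMeasurable (h : ℝ → ℂ) volume := Lp.aestronglyMeasurable h
    set I : ℕ → ℝ≥0∞ := fun M =>
      ∫⁻ x, (‖((1 - fejerSymbol (n M) x : ℝ) : ℂ) * (h : ℝ → ℂ) x‖₊ : ℝ≥0∞) ^ (2:ℝ) ∂volume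
      with hI
    have hBI : ∀ M, B M = (I M) ^ ((1:ℝ)/2) := by
      intro M
      simp only [hB, hI]
      rw [eLpNorm_eq_lintegral_rpow_enorm_toReal (p := 2) (μ := (volume : Measure ℝ))
        (by norm_num) (by norm_num)]
      norm_num
      rfl
    have hIfin : ∫⁻ x, (‖(h : ℝ → ℂ) x‖₊ : ℝ≥0∞) ^ (2:ℝ) ∂volume ≠ ⊤ := by
      intro hcon
      have := Lp.eLpNorm_lt_top h
      rw [eLpNorm_eq_lintegral_rpow_enorm_toReal (p := 2) (μ := (volume : Measure ℝ))
        (by norm_num) (by norm_num)] at this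
      rw [ENNReal.toReal_ofNat, show ∫⁻ x, ‖(h : ℝ → ℂ) x‖ₑ ^ (2:ℝ) ∂volume = ⊤ from hcon] at this
      rw [ENNReal.top_rpow_of_pos (by norm_num)] at this
      exact lt_irrefl _ this
    have hItend : Tendsto I atTop (nhds 0) := by
      have h0 : (0:ℝ≥0∞) = ∫⁻ _x, (0:ℝ≥0∞) ∂(volume : Measure ℝ) := by simp
      rw [h0]
      apply tendsto_lintegral_of_dominated_convergence'
        (fun x => (‖(h : ℝ → ℂ) x‖₊ : ℝ≥0∞) ^ (2:ℝ))
      · intro M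
        exact ENNReal.continuous_rpow_const.measurable.comp_aemeasurable
          ((((Complex.continuous_ofReal.comp
            (continuous_const.sub (fejer_continuous (n M)))).aestronglyMeasurable).mul
            hmeas).enorm)
      · intro M
        apply ae_of_all
        intro x
        have hc1 : ‖((1 - fejerSymbol (n M) x : ℝ) : ℂ)‖₊ ≤ 1 := by
          rw [← NNReal.coe_le_coe]
          simp only [coe_nnnorm, Complex.norm_real, Real.norm_eq_abs, NNReal.coe_one]
          rw [abs_of_nonneg (by linarith [fejer_le_one (n M) x])]
          linarith [fejer_nonneg (n M) x]
        apply ENNReal.rpow_le_rpow _ (by norm_num)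
        rw [nnnorm_mul, ENNReal.coe_mul]
        calc ((‖((1 - fejerSymbol (n M) x : ℝ) : ℂ)‖₊ : ℝ≥0∞)) * (‖(h : ℝ → ℂ) x‖₊ : ℝ≥0∞)
            ≤ 1 * (‖(h : ℝ → ℂ) x‖₊ : ℝ≥0∞) := by
              apply mul_le_mul_left
              exact_mod_cast hc1
          _ = (‖(h : ℝ → ℂ) x‖₊ : ℝ≥0∞) := one_mul _
      · exact hIfin
      · apply ae_of_all
        intro x
        have hc : Tendsto (fun M => (1 - fejerSymbol (n M) x : ℝ)) atTop (nhds 0) := by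
          have := (tendsto_const_nhds (x := (1:ℝ)) (f := atTop (α := ℕ))).sub
            (fejer_tendsto x hna)
          simpa using this
        have hc2 : Tendsto (fun M => ((1 - fejerSymbol (n M) x : ℝ) : ℂ) * (h : ℝ → ℂ) x)
            atTop (nhds 0) := by
          have := ((Complex.continuous_ofReal.tendsto 0).comp hc).mul_const ((h : ℝ → ℂ) x)
          simpa using this
        have hc3 : Tendsto
            (fun M => (‖((1 - fejerSymbol (n M) x : ℝ) : ℂ) * (h : ℝ → ℂ) x‖₊ : ℝ≥0∞))
            atTop (nhds 0) := by
          rw [← ENNReal.coe_zero]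
          rw [ENNReal.tendsto_coe]
          have : Tendsto (nnnorm : ℂ → ℝ≥0) (nhds 0) (nhds 0) := by
            simpa using continuous_nnnorm.tendsto (0:ℂ)
          exact this.comp hc2
        have := (ENNReal.continuous_rpow_const (y := (2:ℝ))).tendsto 0 |>.comp hc3
        simpa [ENNReal.zero_rpow_of_pos, Function.comp_def] using this
    have := (ENNReal.continuous_rpow_const (y := (1:ℝ)/2)).tendsto 0 |>.comp hItend
    rw [show (0:ℝ≥0∞) ^ ((1:ℝ)/2) = 0 by simp [ENNReal.zero_rpow_of_pos]] at this
    convert this using 1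
    funext M
    exact hBI M
  -- conclude Cauchy
  rw [Metric.cauchySeq_iff']
  intro δ hδ
  have hδ' : (0:ℝ≥0∞) < ENNReal.ofReal δ := ENNReal.ofReal_pos.mpr hδ
  have hev := hBtend.eventually (gt_mem_nhds hδ')
  rw [eventually_atTop] at hev
  obtain ⟨M1, hM1⟩ := hev
  refine ⟨M1, fun N hN => ?_⟩
  rw [dist_eq_norm]
  calc ‖S N - S M1‖ ≤ (B (M1+1)).toReal := hbound M1 N hN
    _ < δ := ENNReal.toReal_lt_of_lt_ofReal (hM1 (M1+1) (Nat.le_succ M1))
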